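/- Under the stated hypotheses, the functions t ↦ g(t,α(t)) and t ↦ g(t,β(t)) are continuous on [0,∞). -/

import Mathlib

open Set Filter Topology

private lemma aux_17 (M : ℝ) (hM : 0 < M)
    (α β : ℝ → ℝ)
    (hα : ContinuousOn α (Set.Ici 0)) (hβ : ContinuousOn β (Set.Ici 0))
    (hαβ : ∀ t ∈ Set.Ici (0:ℝ), α t < β t)
    (g : ℝ → ℝ → ℝ)
    (hHolder : ∀ t ∈ Set.Ici (0:ℝ), ∀ x1 x2 : ℝ, α t ≤ x1 → x1 ≤ x2 → x2 ≤ β t →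
      |g t x2 - g t x1| ≤ Real.sqrt M * Real.sqrt (x2 - x1))
    (hconv : ∀ t0 ∈ Set.Ici (0:ℝ), ∀ x : ℝ, α t0 < x → x < β t0 →
      ∀ tn : ℕ → ℝ, (∀ n : ℕ, 0 ≤ tn n) → Tendsto tn atTop (nhds t0) →
        Tendsto (fun n => g (tn n) x) atTop (nhds (g t0 x))) :
    ContinuousOn (fun t => g t (α t)) (Set.Ici 0) := by
  intro t0 ht0
  rw [ContinuousWithinAt, Metric.tendsto_nhds]
  intro ε hε
  have hsM : 0 < Real.sqrt M := Real.sqrt_pos.mpr hM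
  set c : ℝ := ε / (3 * Real.sqrt M) with hc
  have hcpos : 0 < c := by positivity
  set d : ℝ := min ((β t0 - α t0)/2) (c^2/4) with hd
  have hdpos : 0 < d := lt_min (by linarith [hαβ t0 ht0]) (by positivity)
  set x : ℝ := α t0 + d with hx
  have hxα : α t0 < x := by simp only [hx]; linarith
  have hxβ : x < β t0 := by
    have h1 : d ≤ (β t0 - α t0)/2 := min_le_left _ _
    have h2 := hαβ t0 ht0
    simp only [hx]; linarith
  have hsqrt : Real.sqrt M * Real.sqrt (2*d) < ε/3 := by
    have h1 : 2*d < c^2 := by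
      have : d ≤ c^2/4 := min_le_right _ _
      nlinarith
    have h2 : Real.sqrt (2*d) < c := by
      have := Real.sqrt_lt_sqrt (by positivity) h1
      rwa [Real.sqrt_sq hcpos.le] at this
    calc Real.sqrt M * Real.sqrt (2*d) < Real.sqrt M * c :=
          mul_lt_mul_of_pos_left h2 hsM
      _ = ε/3 := by rw [hc]; field_simp
  have hgx : Tendsto (fun t => g t x) (nhdsWithin t0 (Set.Ici 0)) (nhds (g t0 x)) := by
    rw [tendsto_iff_seq_tendsto]
    intro u hu
    have hu' : Tendsto u atTop (nhds t0) := hu.mono_right nhdsWithin_le_nhds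
    have humem : ∀ᶠ n in atTop, u n ∈ Set.Ici (0:ℝ) :=
      hu.eventually eventually_mem_nhdsWithin
    set v : ℕ → ℝ := fun n => max (u n) 0 with hv
    have hv0 : ∀ n, 0 ≤ v n := fun n => le_max_right _ _
    have hvt : Tendsto v atTop (nhds t0) := by
      have : Tendsto v atTop (nhds (max t0 0)) := hu'.max tendsto_const_nhds
      rwa [max_eq_left ht0] at this
    have hcv := hconv t0 ht0 x hxα hxβ v hv0 hvt
    refine hcv.congr' ?_
    filter_upwards [humem] with n hn
    simp only [Function.comp, hv, max_eq_left (show (0:ℝ) ≤ u n from hn)]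
  have E3 : ∀ᶠ t in nhdsWithin t0 (Set.Ici 0), dist (g t x) (g t0 x) < ε/3 :=
    (Metric.tendsto_nhds.mp hgx) _ (by positivity)
  have E1 : ∀ᶠ t in nhdsWithin t0 (Set.Ici 0), |α t - α t0| < d := by
    have := Metric.tendsto_nhds.mp (hα t0 ht0) d hdpos
    simpa [Real.dist_eq] using this
  have E2 : ∀ᶠ t in nhdsWithin t0 (Set.Ici 0), |β t - β t0| < β t0 - x := by
    have := Metric.tendsto_nhds.mp (hβ t0 ht0) (β t0 - x) (by linarith)
    simpa [Real.dist_eq] using this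
  have E4 : ∀ᶠ t in nhdsWithin t0 (Set.Ici 0), t ∈ Set.Ici (0:ℝ) :=
    eventually_mem_nhdsWithin
  filter_upwards [E1, E2, E3, E4] with t h1 h2 h3 h4
  obtain ⟨h1a, h1b⟩ := abs_lt.mp h1
  obtain ⟨h2a, h2b⟩ := abs_lt.mp h2
  have hαtx : α t < x := by simp only [hx]; linarith
  have hxd : x - α t < 2*d := by simp only [hx]; linarith
  have hxβt : x < β t := by linarith
  have T1 : |g t x - g t (α t)| ≤ Real.sqrt M * Real.sqrt (x - α t) :=
    hHolder t h4 (α t) x le_rfl hαtx.le hxβt.le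
  have T1' : |g t x - g t (α t)| < ε/3 := by
    have hle : Real.sqrt (x - α t) ≤ Real.sqrt (2*d) := Real.sqrt_le_sqrt hxd.le
    calc |g t x - g t (α t)| ≤ Real.sqrt M * Real.sqrt (x - α t) := T1
      _ ≤ Real.sqrt M * Real.sqrt (2*d) := mul_le_mul_of_nonneg_left hle hsM.le
      _ < ε/3 := hsqrt
  have T3 : |g t0 x - g t0 (α t0)| ≤ Real.sqrt M * Real.sqrt (x - α t0) :=
    hHolder t0 ht0 (α t0) x le_rfl hxα.le hxβ.le
  have T3' : |g t0 x - g t0 (α t0)| < ε/3 := by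
    have hle : Real.sqrt (x - α t0) ≤ Real.sqrt (2*d) := by
      apply Real.sqrt_le_sqrt; simp only [hx]; linarith
    calc |g t0 x - g t0 (α t0)| ≤ Real.sqrt M * Real.sqrt (x - α t0) := T3
      _ ≤ Real.sqrt M * Real.sqrt (2*d) := mul_le_mul_of_nonneg_left hle hsM.le
      _ < ε/3 := hsqrt
  rw [Real.dist_eq] at h3 ⊢
  have heq : g t (α t) - g t0 (α t0) =
      -(g t x - g t (α t)) + (g t x - g t0 x) + (g t0 x - g t0 (α t0)) := by ring
  calc |g t (α t) - g t0 (α t0)|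
      ≤ |(-(g t x - g t (α t)))| + |g t x - g t0 x| + |g t0 x - g t0 (α t0)| := by
        rw [heq]; exact (abs_add_le _ _).trans (by gcongr; exact abs_add_le _ _)
    _ = |g t x - g t (α t)| + |g t x - g t0 x| + |g t0 x - g t0 (α t0)| := by
        rw [abs_neg]
    _ < ε := by linarith

/-- If `g(t,·)` is uniformly `1/2`-Hölder (with constant `√M`) on `[α(t), β(t)]`,
`α, β` are continuous with `α < β`, and `g(t_n, x) → g(t0, x)` whenever `t_n → t0` in
`[0,∞)` and `x ∈ (α(t0), β(t0))`, then `t ↦ g(t, α(t))` and `t ↦ g(t, β(t))` are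
continuous on `[0,∞)`. -/
theorem stmt_17 (M : ℝ) (hM : 0 < M)
    (α β : ℝ → ℝ)
    (hα : ContinuousOn α (Set.Ici 0)) (hβ : ContinuousOn β (Set.Ici 0))
    (hαβ : ∀ t ∈ Set.Ici (0:ℝ), α t < β t)
    (g : ℝ → ℝ → ℝ)
    (hHolder : ∀ t ∈ Set.Ici (0:ℝ), ∀ x1 x2 : ℝ, α t ≤ x1 → x1 ≤ x2 → x2 ≤ β t →
      |g t x2 - g t x1| ≤ Real.sqrt M * Real.sqrt (x2 - x1))
    (hconv : ∀ t0 ∈ Set.Ici (0:ℝ), ∀ x : ℝ, α t0 < x → x < β t0 →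
      ∀ tn : ℕ → ℝ, (∀ n : ℕ, 0 ≤ tn n) → Tendsto tn atTop (nhds t0) →
        Tendsto (fun n => g (tn n) x) atTop (nhds (g t0 x))) :
    ContinuousOn (fun t => g t (α t)) (Set.Ici 0) ∧
    ContinuousOn (fun t => g t (β t)) (Set.Ici 0) := by
  constructor
  · exact aux_17 M hM α β hα hβ hαβ g hHolder hconv
  · have h := aux_17 M hM (fun t => -β t) (fun t => -α t) hβ.neg hα.neg
      (fun t ht => by simpa using hαβ t ht) (fun t x => g t (-x))
      (by
        intro t ht x1 x2 h1 h2 h3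
        have hb := hHolder t ht (-x2) (-x1) (by linarith) (by linarith) (by linarith)
        calc |g t (-x2) - g t (-x1)| = |g t (-x1) - g t (-x2)| := abs_sub_comm _ _
          _ ≤ Real.sqrt M * Real.sqrt (-x1 - -x2) := hb
          _ = Real.sqrt M * Real.sqrt (x2 - x1) := by ring_nf)
      (by
        intro t0 ht0 y hy1 hy2 tn htn0 htn
        exact hconv t0 ht0 (-y) (by linarith) (by linarith) tn htn0 htn)
    simpa using h
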